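/- Let g_n(z) = ∑_{j ∈ J} (a/(R_j(z) - a))^{2n} where a > 0 and the values R_j(z) ∈ ℂ satisfy: Re(R_j(z)) ≤ 0 for all j, and for each integer k ≥ 0 the number of indices j with k·a ≤ |R_j(z)| < (k+1)·a is at most C·(k+1)^t. Then for all n large enough (depending only on C, t), |g_n(z)| ≤ 1 + A/n for a constant A depending only on C and t. -/

import Mathlib

lemma basel_sum (m : ℕ) : ∑ i ∈ Finset.range m, (1:ℝ)/((i:ℝ)+1)^2 ≤ 2 - 2/((m:ℝ)+1) := by
  induction m with
  | zero => norm_num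
  | succ m ih =>
    rw [Finset.sum_range_succ]
    have hm : (0:ℝ) < (m:ℝ) + 1 := by positivity
    have hm2 : (0:ℝ) < (m:ℝ) + 1 + 1 := by positivity
    have key : (1:ℝ)/((m:ℝ)+1)^2 ≤ 2/((m:ℝ)+1) - 2/((m:ℝ)+1+1) := by
      rw [div_sub_div _ _ (ne_of_gt hm) (ne_of_gt hm2), div_le_div_iff₀ (by positivity) (by positivity)]
      nlinarith [sq_nonneg ((m:ℝ)+1)]
    push_cast
    linarith

lemma term_bound (a : ℝ) (ha : 0 < a) (z : ℂ) (hre : z.re ≤ 0) (k : ℕ)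
    (hk : (k:ℝ) * a ≤ ‖z‖) (n : ℕ) :
    ‖((a:ℂ)/(z - a))^(2*n)‖ ≤ (1/((k:ℝ)^2+1))^n := by
  rw [norm_pow, pow_mul]
  apply pow_le_pow_left₀ (by positivity)
  have hz : ‖z - a‖ ^ 2 = (z.re - a)^2 + z.im^2 := by
    rw [Complex.sq_norm, Complex.normSq_apply]
    simp [Complex.sub_re, Complex.sub_im]
    ring
  have habs : ((k:ℝ)*a)^2 ≤ z.re^2 + z.im^2 := by
    have h1 : (0:ℝ) ≤ (k:ℝ)*a := by positivity
    have := Complex.sq_norm z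
    rw [Complex.normSq_apply] at this
    nlinarith [norm_nonneg z]
  have hden : ((k:ℝ)^2+1) * a^2 ≤ ‖z - a‖ ^ 2 := by
    rw [hz]; nlinarith
  have hdenpos : (0:ℝ) < ‖z - a‖ := by
    nlinarith [norm_nonneg (z - (a:ℂ)), sq_nonneg a]
  rw [norm_div, Complex.norm_real, Real.norm_eq_abs, abs_of_pos ha,
    div_pow, div_le_div_iff₀ (by positivity) (by positivity)]
  nlinarith

lemma arith_bound (C : ℝ) (hC : 0 < C) (t n k : ℕ) (hk : 1 ≤ k) (hn : t + 1 ≤ n) :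
    C * ((k:ℝ)+1)^t * (1/((k:ℝ)^2+1))^n ≤ C * 2^(2*t+1) * (1/2:ℝ)^n * (1/(k:ℝ)^2) := by
  have hkr : (1:ℝ) ≤ (k:ℝ) := by exact_mod_cast hk
  have hk2 : (0:ℝ) < (k:ℝ)^2 + 1 := by positivity
  have e1 : ((k:ℝ)+1)^t ≤ ((k:ℝ)^2+1)^t := pow_le_pow_left₀ (by positivity) (by nlinarith) t
  have e2 : (2:ℝ)^(n-(t+1)) ≤ ((k:ℝ)^2+1)^(n-(t+1)) := pow_le_pow_left₀ (by norm_num) (by nlinarith) _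
  have e3 : (2:ℝ)^n = 2^(t+1) * 2^(n-(t+1)) := by rw [← pow_add]; congr 1; omega
  have hk2' : (k:ℝ)^2 ≤ (k:ℝ)^2+1 := by linarith
  have h2t : (2:ℝ)^(t+1) ≤ 2^(2*t+1) := pow_le_pow_right₀ (by norm_num) (by omega)
  have big : ((k:ℝ)+1)^t * ((2:ℝ)^n * (k:ℝ)^2) ≤ 2^(2*t+1) * ((k:ℝ)^2+1)^n := by
    have e4 : ((k:ℝ)^2+1)^n = ((k:ℝ)^2+1)^t * (((k:ℝ)^2+1)^(n-(t+1)) * ((k:ℝ)^2+1)) := by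
      rw [← pow_succ, ← pow_add]; congr 1; omega
    calc ((k:ℝ)+1)^t * ((2:ℝ)^n * (k:ℝ)^2)
        = 2^(t+1) * (((k:ℝ)+1)^t * ((2:ℝ)^(n-(t+1)) * (k:ℝ)^2)) := by rw [e3]; ring
      _ ≤ 2^(t+1) * (((k:ℝ)^2+1)^t * (((k:ℝ)^2+1)^(n-(t+1)) * ((k:ℝ)^2+1))) := by
          apply mul_le_mul_of_nonneg_left _ (by positivity)
          exact mul_le_mul e1 (mul_le_mul e2 hk2' (by positivity) (by positivity))
            (by positivity) (by positivity)
      _ = 2^(t+1) * ((k:ℝ)^2+1)^n := by rw [e4]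
      _ ≤ 2^(2*t+1) * ((k:ℝ)^2+1)^n := mul_le_mul_of_nonneg_right h2t (by positivity)
  have l1 : C * ((k:ℝ)+1)^t * (1/((k:ℝ)^2+1))^n = (C*((k:ℝ)+1)^t) / (((k:ℝ)^2+1)^n) := by
    rw [one_div_pow]; exact mul_one_div _ _
  have l2 : C * 2^(2*t+1) * (1/2:ℝ)^n * (1/(k:ℝ)^2) = (C*2^(2*t+1)) / ((2:ℝ)^n * (k:ℝ)^2) := by
    rw [one_div_pow]; field_simp
  rw [l1, l2, div_le_div_iff₀ (by positivity) (by positivity)]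
  calc C*((k:ℝ)+1)^t*((2:ℝ)^n*(k:ℝ)^2) = C*(((k:ℝ)+1)^t*((2:ℝ)^n*(k:ℝ)^2)) := by ring
    _ ≤ C*(2^(2*t+1)*((k:ℝ)^2+1)^n) := mul_le_mul_of_nonneg_left big hC.le
    _ = C*2^(2*t+1)*((k:ℝ)^2+1)^n := by ring

theorem g_n_bound (J : Type*) [Countable J] (a : ℝ) (ha : 0 < a)
    (R : J → ℂ) (hre : ∀ j, (R j).re ≤ 0)
    (t : ℕ) (ht : 0 < t) (C : ℝ) (hC : 0 < C)
    (hcount : ∀ k : ℕ, ∃ s : Finset J,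
      (∀ j : J, (k : ℝ) * a ≤ ‖R j‖ ∧ ‖R j‖ < ((k : ℝ) + 1) * a →
        j ∈ s) ∧ (s.card : ℝ) ≤ C * ((k : ℝ) + 1) ^ t)
    (hone : ∀ j₁ j₂ : J, ‖R j₁‖ < a → ‖R j₂‖ < a → j₁ = j₂) :
    ∃ A : ℝ, 0 < A ∧ ∃ N : ℕ, ∀ n : ℕ, N ≤ n →
      ‖∑' j : J, ((a : ℂ) / (R j - a)) ^ (2 * n)‖ ≤ 1 + A / n := by
  refine ⟨C * 2^(2*t+2), by positivity, t+1, fun n hn => ?_⟩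
  have hnpos : 0 < n := lt_of_lt_of_le (Nat.succ_pos t) hn
  have hnr : (0:ℝ) < (n:ℝ) := by exact_mod_cast hnpos
  set κ : J → ℕ := fun j => ⌊‖R j‖ / a⌋₊ with hκdef
  have hklo : ∀ j, (κ j : ℝ) * a ≤ ‖R j‖ := by
    intro j
    rw [← le_div_iff₀ ha]
    exact Nat.floor_le (by positivity)
  have hkhi : ∀ j, ‖R j‖ < ((κ j : ℝ) + 1) * a := by
    intro j
    rw [← div_lt_iff₀ ha]
    exact Nat.lt_floor_add_one _
  set B : ℕ → ℝ := fun k => if k = 0 then 1 else C * 2^(2*t+1) * (1/2:ℝ)^n * (1/(k:ℝ)^2)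
    with hBdef
  have hB0 : ∀ k, 0 ≤ B k := by
    intro k
    by_cases h : k = 0 <;> simp only [hBdef, h, if_true, if_false, reduceIte] <;> positivity
  have hfib : ∀ (F : Finset J) (k : ℕ),
      ∑ j ∈ F.filter (fun j => κ j = k), ‖((a:ℂ)/(R j - a))^(2*n)‖ ≤ B k := by
    intro F k
    rcases Nat.eq_zero_or_pos k with h0 | hpos
    · subst h0
      simp only [hBdef, if_pos rfl]
      have hlt : ∀ j ∈ F.filter (fun j => κ j = 0), ‖R j‖ < a := by
        intro j hj
        rw [Finset.mem_filter] at hj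
        have := hkhi j
        rw [hj.2] at this
        simpa using this
      have hcard : (F.filter (fun j => κ j = 0)).card ≤ 1 := by
        apply Finset.card_le_one.mpr
        intro j₁ h₁ j₂ h₂
        exact hone j₁ j₂ (hlt j₁ h₁) (hlt j₂ h₂)
      calc ∑ j ∈ F.filter (fun j => κ j = 0), ‖((a:ℂ)/(R j - a))^(2*n)‖
          ≤ ∑ _j ∈ F.filter (fun j => κ j = 0), (1:ℝ) := by
            apply Finset.sum_le_sum
            intro j _
            have h := term_bound a ha (R j) (hre j) 0 (by simpa using norm_nonneg (R j)) n
            simpa using h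
        _ = (F.filter (fun j => κ j = 0)).card := by simp
        _ ≤ 1 := by exact_mod_cast hcard
    · obtain ⟨s, hs1, hs2⟩ := hcount k
      have hsub : F.filter (fun j => κ j = k) ⊆ s := by
        intro j hj
        rw [Finset.mem_filter] at hj
        exact hs1 j ⟨by rw [← hj.2]; exact hklo j, by rw [← hj.2]; exact hkhi j⟩
      have hcard : ((F.filter (fun j => κ j = k)).card : ℝ) ≤ C * ((k:ℝ)+1)^t :=
        le_trans (by exact_mod_cast Finset.card_le_card hsub) hs2
      calc ∑ j ∈ F.filter (fun j => κ j = k), ‖((a:ℂ)/(R j - a))^(2*n)‖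
          ≤ ∑ _j ∈ F.filter (fun j => κ j = k), (1/((k:ℝ)^2+1))^n := by
            apply Finset.sum_le_sum
            intro j hj
            rw [Finset.mem_filter] at hj
            exact hj.2 ▸ term_bound a ha (R j) (hre j) (κ j) (hklo j) n
        _ = ((F.filter (fun j => κ j = k)).card : ℝ) * (1/((k:ℝ)^2+1))^n := by
            rw [Finset.sum_const, nsmul_eq_mul]
        _ ≤ (C * ((k:ℝ)+1)^t) * (1/((k:ℝ)^2+1))^n :=
            mul_le_mul_of_nonneg_right hcard (by positivity)
        _ ≤ B k := by
            rw [hBdef]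
            simp only [Nat.pos_iff_ne_zero.mp hpos, if_false, reduceIte]
            exact arith_bound C hC t n k hpos hn
  have key : ∀ F : Finset J,
      ∑ j ∈ F, ‖((a:ℂ)/(R j - a))^(2*n)‖ ≤ 1 + (C * 2^(2*t+2))/n := by
    intro F
    set M := (F.image κ).sup id with hM
    have himg : F.image κ ⊆ Finset.range (M+1) := by
      intro k hk
      exact Finset.mem_range.mpr (Nat.lt_succ_of_le (Finset.le_sup (f := id) hk))
    have hpow : ((1:ℝ)/2)^n ≤ 1/(n:ℝ) := by
      rw [one_div_pow]
      apply one_div_le_one_div_of_le hnr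
      exact_mod_cast (Nat.lt_two_pow_self (n := n)).le
    calc ∑ j ∈ F, ‖((a:ℂ)/(R j - a))^(2*n)‖
        = ∑ k ∈ F.image κ, ∑ j ∈ F.filter (fun j => κ j = k), ‖((a:ℂ)/(R j - a))^(2*n)‖ :=
          (Finset.sum_fiberwise_of_maps_to (fun j hj => Finset.mem_image_of_mem κ hj) _).symm
      _ ≤ ∑ k ∈ F.image κ, B k := Finset.sum_le_sum fun k _ => hfib F k
      _ ≤ ∑ k ∈ Finset.range (M+1), B k :=
          Finset.sum_le_sum_of_subset_of_nonneg himg (fun k _ _ => hB0 k)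
      _ = (∑ k ∈ Finset.range M, B (k+1)) + B 0 := Finset.sum_range_succ' B M
      _ ≤ 1 + (C * 2^(2*t+2))/n := by
          have hB0val : B 0 = 1 := by simp [hBdef]
          have hsum2 : ∑ k ∈ Finset.range M, B (k+1)
              ≤ C * 2^(2*t+1) * (1/2:ℝ)^n * (2 - 2/((M:ℝ)+1)) := by
            have : ∀ k ∈ Finset.range M, B (k+1)
                = C * 2^(2*t+1) * (1/2:ℝ)^n * ((1:ℝ)/((k:ℝ)+1)^2) := by
              intro k _
              simp only [hBdef, Nat.succ_ne_zero, if_false, reduceIte]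
              push_cast
              ring
            rw [Finset.sum_congr rfl this, ← Finset.mul_sum]
            exact mul_le_mul_of_nonneg_left (basel_sum M) (by positivity)
          have h2M : 2 - 2/((M:ℝ)+1) ≤ 2 := by
            have : (0:ℝ) ≤ 2/((M:ℝ)+1) := by positivity
            linarith
          have : C * 2^(2*t+1) * (1/2:ℝ)^n * (2 - 2/((M:ℝ)+1)) ≤ (C * 2^(2*t+2))/n := by
            calc C * 2^(2*t+1) * (1/2:ℝ)^n * (2 - 2/((M:ℝ)+1))
                ≤ C * 2^(2*t+1) * (1/2:ℝ)^n * 2 :=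
                  mul_le_mul_of_nonneg_left h2M (by positivity)
              _ = C * 2^(2*t+2) * (1/2:ℝ)^n := by ring
              _ ≤ C * 2^(2*t+2) * (1/(n:ℝ)) :=
                  mul_le_mul_of_nonneg_left hpow (by positivity)
              _ = (C * 2^(2*t+2))/n := by ring
          linarith
  have hsum : Summable (fun j => ‖((a:ℂ)/(R j - a))^(2*n)‖) :=
    summable_of_sum_le (fun j => norm_nonneg _) key
  calc ‖∑' j : J, ((a : ℂ) / (R j - a)) ^ (2 * n)‖
      = ‖∑' j : J, ((a : ℂ) / (R j - a)) ^ (2 * n)‖ := rfl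
    _ ≤ ∑' j : J, ‖((a:ℂ)/(R j - a))^(2*n)‖ := norm_tsum_le_tsum_norm hsum
    _ ≤ 1 + (C * 2^(2*t+2))/n := Summable.tsum_le_of_sum_le hsum key
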